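/- Let Q : D → ℝ be convex on a compact convex set D ⊆ ℝ^m, and let (Q^k)_k be a nondecreasing sequence of functions on D (Q^k ≤ Q^{k+1} ≤ Q on D) each L-Lipschitz for a common constant L. If (x^k) ⊆ D is a sequence with lim_{k→∞} (Q(x^k) - Q^k(x^k)) = 0, then also lim_{k→∞} (Q(x^k) - Q^{k-1}(x^k)) = 0. -/

import Mathlib

open Filter

/-- Lemma A.1 (Girardeau–Leclère–Philpott): if `(Q^k)` is a nondecreasing sequence of
uniformly Lipschitz lower approximations of a convex `Q` on a compact convex set and
`Q(x^k) - Q^k(x^k) → 0` along a sequence `(x^k) ⊆ D`, then also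
`Q(x^k) - Q^{k-1}(x^k) → 0`. -/
theorem shifted_gap_tendsto_zero {m : ℕ}
    (D : Set (EuclideanSpace ℝ (Fin m))) (hDconv : Convex ℝ D) (hDcomp : IsCompact D)
    (Q : EuclideanSpace ℝ (Fin m) → ℝ) (hQ : ConvexOn ℝ D Q)
    (Qk : ℕ → EuclideanSpace ℝ (Fin m) → ℝ)
    (L : NNReal) (hLip : ∀ k, LipschitzOnWith L (Qk k) D)
    (hmono : ∀ k, ∀ x ∈ D, Qk k x ≤ Qk (k + 1) x)
    (hle : ∀ k, ∀ x ∈ D, Qk k x ≤ Q x)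
    (x : ℕ → EuclideanSpace ℝ (Fin m)) (hx : ∀ k, x k ∈ D)
    (hconv : Tendsto (fun k => Q (x k) - Qk k (x k)) atTop (nhds 0)) :
    Tendsto (fun k => Q (x k) - Qk (k - 1) (x k)) atTop (nhds 0) := by
  -- monotonicity for all pairs of indices
  have hmono' : ∀ a b : ℕ, a ≤ b → ∀ y ∈ D, Qk a y ≤ Qk b y := by
    intro a b hab y hy
    induction b, hab using Nat.le_induction with
    | base => exact le_refl _
    | succ n hn ih => exact ih.trans (hmono n y hy)
  -- nonnegativity of the shifted gap
  have hg0 : ∀ k, 0 ≤ Q (x k) - Qk (k - 1) (x k) := fun k =>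
    sub_nonneg.2 (hle (k - 1) (x k) (hx k))
  by_contra hcon
  -- get ε > 0 with the shifted gap ≥ ε frequently
  rw [Metric.tendsto_atTop] at hcon
  push_neg at hcon
  obtain ⟨ε, hε, hfreq⟩ := hcon
  have hfreq' : ∃ᶠ k in atTop, ε ≤ Q (x k) - Qk (k - 1) (x k) := by
    rw [frequently_atTop]
    intro N
    obtain ⟨k, hkN, hk⟩ := hfreq N
    refine ⟨k, hkN, ?_⟩
    rwa [Real.dist_eq, sub_zero, abs_of_nonneg (hg0 k)] at hk
  obtain ⟨φ, hφ, hφε⟩ := extraction_of_frequently_atTop hfreq'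
  -- extract a convergent subsequence of points
  obtain ⟨xbar, hxbarD, ψ, hψ, hψconv⟩ :=
    hDcomp.tendsto_subseq (x := fun n => x (φ n)) (fun n => hx (φ n))
  -- the values Q (x k) are bounded
  obtain ⟨M1, hM1⟩ : ∃ M1, ∀ k, |Q (x k) - Qk k (x k)| ≤ M1 := by
    have hb := Metric.isBounded_range_of_tendsto _ hconv
    rw [Metric.isBounded_iff_subset_closedBall 0] at hb
    obtain ⟨r, hr⟩ := hb
    refine ⟨r, fun k => ?_⟩
    have := hr (Set.mem_range_self k)
    simpa [Real.dist_eq] using this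
  obtain ⟨C, hC⟩ := (hDcomp.isBounded.subset_closedBall (x 0))
  have hQbdd : ∀ k, |Q (x k)| ≤ M1 + (|Q (x 0)| + |Qk 0 (x 0)|) + L * C := by
    intro k
    have h1 : |Qk k (x k) - Qk k (x 0)| ≤ L * C := by
      have := (hLip k).dist_le_mul (x k) (hx k) (x 0) (hx 0)
      have hd : dist (x k) (x 0) ≤ C := hC (hx k)
      calc |Qk k (x k) - Qk k (x 0)| = dist (Qk k (x k)) (Qk k (x 0)) := by
            rw [Real.dist_eq]
        _ ≤ L * dist (x k) (x 0) := this
        _ ≤ L * C := by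
            exact mul_le_mul_of_nonneg_left hd (by positivity)
    have h2 : |Qk k (x 0)| ≤ |Q (x 0)| + |Qk 0 (x 0)| := by
      have hub : Qk k (x 0) ≤ Q (x 0) := hle k (x 0) (hx 0)
      have hlb : Qk 0 (x 0) ≤ Qk k (x 0) := hmono' 0 k (Nat.zero_le k) (x 0) (hx 0)
      rw [abs_le]
      constructor
      · calc -(|Q (x 0)| + |Qk 0 (x 0)|) ≤ -|Qk 0 (x 0)| := by
              have := abs_nonneg (Q (x 0)); linarith
          _ ≤ Qk 0 (x 0) := neg_abs_le _
          _ ≤ Qk k (x 0) := hlb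
      · calc Qk k (x 0) ≤ Q (x 0) := hub
          _ ≤ |Q (x 0)| := le_abs_self _
          _ ≤ |Q (x 0)| + |Qk 0 (x 0)| := by have := abs_nonneg (Qk 0 (x 0)); linarith
    calc |Q (x k)|
        = |(Q (x k) - Qk k (x k)) + (Qk k (x k) - Qk k (x 0)) + Qk k (x 0)| := by ring_nf
      _ ≤ |Q (x k) - Qk k (x k)| + |Qk k (x k) - Qk k (x 0)| + |Qk k (x 0)| := by
          exact (abs_add_le _ _).trans (add_le_add_left (abs_add_le _ _) _)
      _ ≤ M1 + (|Q (x 0)| + |Qk 0 (x 0)|) + L * C := by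
          have := hM1 k; linarith
  set M : ℝ := M1 + (|Q (x 0)| + |Qk 0 (x 0)|) + L * C with hM
  -- extract a further subsequence along which Q (x ·) converges
  obtain ⟨q, _, χ, hχ, hχconv⟩ :=
    tendsto_subseq_of_bounded (x := fun n => Q (x (φ (ψ n)))) (Metric.isBounded_Icc (-M) M)
      (s := Set.Icc (-M) M) (fun n => abs_le.1 (hQbdd (φ (ψ n))))
  set θ : ℕ → ℕ := fun n => φ (ψ (χ n)) with hθ
  have hθmono : StrictMono θ := hφ.comp (hψ.comp hχ)
  -- the three convergences along θ
  have hxθ : Tendsto (fun n => x (θ n)) atTop (nhds xbar) :=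
    hψconv.comp hχ.tendsto_atTop
  have hQθ : Tendsto (fun n => Q (x (θ n))) atTop (nhds q) := hχconv
  have hgapθ : Tendsto (fun n => Q (x (θ n)) - Qk (θ n) (x (θ n))) atTop (nhds 0) :=
    hconv.comp hθmono.tendsto_atTop
  -- the bounding sequence F tends to 0
  have hF : Tendsto (fun j => (Q (x (θ (j + 1))) - Q (x (θ j)))
      + (Q (x (θ j)) - Qk (θ j) (x (θ j)))
      + (L : ℝ) * dist (x (θ (j + 1))) (x (θ j))) atTop (nhds 0) := by
    have h1 : Tendsto (fun j => Q (x (θ (j + 1))) - Q (x (θ j))) atTop (nhds (q - q)) :=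
      (hQθ.comp (tendsto_add_atTop_nat 1)).sub hQθ
    have h3 : Tendsto (fun j => (L : ℝ) * dist (x (θ (j + 1))) (x (θ j))) atTop
        (nhds ((L : ℝ) * dist xbar xbar)) :=
      ((hxθ.comp (tendsto_add_atTop_nat 1)).dist hxθ).const_mul _
    have := (h1.add hgapθ).add h3
    simpa using this
  -- key inequality : ε ≤ F j for all j
  have hkey : ∀ j, ε ≤ (Q (x (θ (j + 1))) - Q (x (θ j)))
      + (Q (x (θ j)) - Qk (θ j) (x (θ j)))
      + (L : ℝ) * dist (x (θ (j + 1))) (x (θ j)) := by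
    intro j
    have hεj : ε ≤ Q (x (θ (j + 1))) - Qk (θ (j + 1) - 1) (x (θ (j + 1))) := hφε (ψ (χ (j + 1)))
    have hlt : θ j < θ (j + 1) := hθmono (Nat.lt_succ_self j)
    have hle1 : θ j ≤ θ (j + 1) - 1 := Nat.le_sub_one_of_lt hlt
    have h2 : Qk (θ j) (x (θ (j + 1))) ≤ Qk (θ (j + 1) - 1) (x (θ (j + 1))) :=
      hmono' (θ j) (θ (j + 1) - 1) hle1 _ (hx _)
    have h3 : Qk (θ j) (x (θ j)) - (L : ℝ) * dist (x (θ (j + 1))) (x (θ j))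
        ≤ Qk (θ j) (x (θ (j + 1))) := by
      have := (hLip (θ j)).dist_le_mul (x (θ j)) (hx _) (x (θ (j + 1))) (hx _)
      rw [Real.dist_eq] at this
      have habs := abs_le.1 this
      rw [dist_comm]
      linarith [habs.1]
    linarith
  have : ε ≤ 0 := le_of_tendsto_of_tendsto' tendsto_const_nhds hF (fun j => hkey j)
  linarith
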